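/- Let S be the unilateral shift on ℓ². There do not exist a unitary U on a Hilbert space H₀ and an isometric coextension W₂ of S such that W₁ = U ⊕ (I ⊗ S) (the direct sum of a unitary with the minimal isometric coextension of the zero operator on ℓ²) commutes with W₂ and W₂ is of the form (minimal isometric coextension of S) ⊕ (unitary). More precisely, in the setting A₁ = 0 and A₂ = S on H = ℓ², if W₁ = U ⊕ V_{A₁} with U unitary commutes with an isometric coextension W₂ of A₂ on the same space, then W₂ decomposes as X₀ ⊕ (S ⊗ I), which is not of the form V_{A₂} ⊕ (unitary). -/

import Mathlib

open ContinuousLinearMap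

local notation "⟪" x ", " y "⟫" => @inner ℂ _ _ x y

private lemma hb_clm_ext' {ι E F : Type*} [NormedAddCommGroup E] [InnerProductSpace ℂ E]
    [NormedAddCommGroup F] [NormedSpace ℂ F]
    (b : HilbertBasis ι ℂ E) {T T' : E →L[ℂ] F} (h : ∀ i, T (b i) = T' (b i)) : T = T' := by
  refine ContinuousLinearMap.ext_on
    (Submodule.dense_iff_topologicalClosure_eq_top.mpr b.dense_span) ?_
  rintro x ⟨i, rfl⟩
  exact h i

/-- Shalit's example: for `A₁ = 0` and `A₂ = S` (the unilateral shift on `ℓ²`), there is no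
commuting pair of isometric coextensions with `W₁ = U ⊕ V_{A₁}` (`U` unitary,
`V_{A₁} = I ⊗ S` the minimal isometric coextension of `0`) and `W₂` of the form
`V_{A₂} ⊕ (unitary) = S ⊕ (unitary)`.  Here `H` carries an orthonormal basis `e : ℕ → H`
with `S eₙ = e_{n+1}`, `HT` carries an orthonormal basis `f : ℕ × ℕ → HT` with
`V₁ f(m,n) = f(m,n+1)`, the copy of `H` inside `H₀ ⊕ HT` is `h ↦ (0, g h)` with
`g eₘ = f(m,0)`, and "`W₂` is of the form `S ⊕ unitary`" is witnessed by a unitary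
`Ψ : H₀ ⊕ HT ≃ H ⊕ M` carrying the copy of `H` to the first coordinate and conjugating
`W₂` to `S ⊕ Y` with `Y` unitary.  These conditions are contradictory. -/
theorem stmt_19 {H H₀ HT M : Type*}
    [NormedAddCommGroup H] [InnerProductSpace ℂ H] [CompleteSpace H]
    [NormedAddCommGroup H₀] [InnerProductSpace ℂ H₀] [CompleteSpace H₀]
    [NormedAddCommGroup HT] [InnerProductSpace ℂ HT] [CompleteSpace HT]
    [NormedAddCommGroup M] [InnerProductSpace ℂ M] [CompleteSpace M]
    (e : HilbertBasis ℕ ℂ H) (S : H →L[ℂ] H) (hS : ∀ n : ℕ, S (e n) = e (n + 1))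
    (U : H₀ →L[ℂ] H₀) (hUiso : ∀ x, ‖U x‖ = ‖x‖) (hUsurj : Function.Surjective U)
    (f : HilbertBasis (ℕ × ℕ) ℂ HT) (V₁ : HT →L[ℂ] HT)
    (hV₁ : ∀ m n : ℕ, V₁ (f (m, n)) = f (m, n + 1))
    (g : H →L[ℂ] HT) (hg : ∀ m : ℕ, g (e m) = f (m, 0))
    (W₁ W₂ : WithLp 2 (H₀ × HT) →L[ℂ] WithLp 2 (H₀ × HT))
    (hW₁ : ∀ (a : H₀) (b : HT), W₁ ((WithLp.equiv 2 (H₀ × HT)).symm (a, b)) =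
      (WithLp.equiv 2 (H₀ × HT)).symm (U a, V₁ b))
    (hW₂iso : ∀ z, ‖W₂ z‖ = ‖z‖)
    (hcomm : W₁ ∘L W₂ = W₂ ∘L W₁)
    (J : H →L[ℂ] WithLp 2 (H₀ × HT))
    (hJ : ∀ h : H, J h = (WithLp.equiv 2 (H₀ × HT)).symm (0, g h))
    (hcoext : ContinuousLinearMap.adjoint W₂ ∘L J = J ∘L ContinuousLinearMap.adjoint S)
    (Y : M →L[ℂ] M) (hYiso : ∀ m, ‖Y m‖ = ‖m‖) (hYsurj : Function.Surjective Y)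
    (Ψ : WithLp 2 (H₀ × HT) ≃ₗᵢ[ℂ] WithLp 2 (H × M))
    (hΨJ : ∀ h : H, Ψ (J h) = (WithLp.equiv 2 (H × M)).symm (h, 0))
    (hΨW : ∀ (h : H) (m : M),
      Ψ (W₂ (Ψ.symm ((WithLp.equiv 2 (H × M)).symm (h, m)))) =
        (WithLp.equiv 2 (H × M)).symm (S h, Y m)) :
    False := by
  classical
  set P := WithLp 2 (H₀ × HT)
  set Q := WithLp 2 (H × M)
  set pr : H₀ × HT → P := ⇑(WithLp.equiv 2 (H₀ × HT)).symm with hpr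
  set qr : H × M → Q := ⇑(WithLp.equiv 2 (H × M)).symm with hqr
  have he := orthonormal_iff_ite.mp e.orthonormal
  have hf := orthonormal_iff_ite.mp f.orthonormal
  have hpr_inner : ∀ (a c : H₀) (b d : HT), ⟪pr (a, b), pr (c, d)⟫ = ⟪a, c⟫ + ⟪b, d⟫ := by
    intro a c b d; rw [WithLp.prod_inner_apply]; rfl
  have hqr_inner : ∀ (a c : H) (b d : M), ⟪qr (a, b), qr (c, d)⟫ = ⟪a, c⟫ + ⟪b, d⟫ := by
    intro a c b d; rw [WithLp.prod_inner_apply]; rfl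
  -- L1 : ⟪e 0, S h⟫ = 0
  have hSe0 : ∀ h : H, ⟪e 0, S h⟫ = 0 := by
    have : (innerSL ℂ (e 0)).comp S = 0 := by
      apply hb_clm_ext' e
      intro n
      simp [hS n, he 0 (n + 1)]
    intro h
    simpa using DFunLike.congr_fun this h
  -- L2 : ⟪f (0,1), V₁ b⟫ = ⟪f (0,0), b⟫
  have hV₁inner : ∀ b : HT, ⟪f (0, 1), V₁ b⟫ = ⟪f (0, 0), b⟫ := by
    have : (innerSL ℂ (f (0, 1))).comp V₁ = innerSL ℂ (f (0, 0)) := by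
      apply hb_clm_ext' f
      rintro ⟨m, n⟩
      have h1 := hf (0, 1) (m, n + 1)
      have h2 := hf (0, 0) (m, n)
      simp only [comp_apply, innerSL_apply_apply, hV₁, h1, h2]
      rcases m with _ | m <;> rcases n with _ | n <;> simp [Prod.ext_iff]
    intro b
    simpa using DFunLike.congr_fun this b
  -- W₂ on the basis vectors of the second summand
  have hJf : ∀ m : ℕ, J (e m) = pr (0, f (m, 0)) := by
    intro m; rw [hJ, hg]
  have hW₂J : ∀ m : ℕ, W₂ (J (e m)) = J (e (m + 1)) := by
    intro m
    apply Ψ.injective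
    have h1 : J (e m) = Ψ.symm (qr (e m, 0)) := by
      rw [← hΨJ (e m)]; simp
    rw [h1, hΨW (e m) 0, hΨJ, hS, map_zero]
  have hcomm' : ∀ z : P, W₁ (W₂ z) = W₂ (W₁ z) := by
    intro z
    have := DFunLike.congr_fun hcomm z
    simpa using this
  have hW₂f : ∀ m n : ℕ, W₂ (pr (0, f (m, n))) = pr (0, f (m + 1, n)) := by
    intro m n
    induction n with
    | zero => rw [← hJf, ← hJf]; exact hW₂J m
    | succ n ih =>
      have hstep : ∀ k : ℕ, W₁ (pr (0, f (k, n))) = pr (0, f (k, n + 1)) := by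
        intro k
        rw [hpr, hW₁ 0 (f (k, n)), map_zero, hV₁]
      rw [← hstep m, ← hcomm', ih, hstep]
  -- J (e 0) is orthogonal to the range of W₂
  have hJe0perp : ∀ z : P, ⟪J (e 0), W₂ z⟫ = 0 := by
    intro z
    have hz : Ψ.symm (qr ((Ψ z).fst, (Ψ z).snd)) = z := Ψ.symm_apply_apply z
    calc ⟪J (e 0), W₂ z⟫ = ⟪Ψ (J (e 0)), Ψ (W₂ z)⟫ := (Ψ.inner_map_map _ _).symm
      _ = ⟪qr (e 0, 0), Ψ (W₂ (Ψ.symm (qr ((Ψ z).fst, (Ψ z).snd))))⟫ := by rw [hΨJ, hz]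
      _ = ⟪qr (e 0, 0), qr (S (Ψ z).fst, Y (Ψ z).snd)⟫ := by rw [hΨW]
      _ = ⟪e 0, S (Ψ z).fst⟫ + ⟪(0 : M), Y (Ψ z).snd⟫ := hqr_inner _ _ _ _
      _ = 0 := by rw [hSe0, inner_zero_left, add_zero]
  set u : P := pr (0, f (0, 1)) with hu
  -- part 1 : u ⊥ W₂ (0, b)
  have hpart1 : ∀ b : HT, ⟪u, W₂ (pr (0, b))⟫ = 0 := by
    have hemb : (((WithLp.prodContinuousLinearEquiv 2 ℂ H₀ HT).symm :
        (H₀ × HT) →L[ℂ] P) ∘L ContinuousLinearMap.inr ℂ H₀ HT) = fun b => pr (0, b) := rfl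
    have : (innerSL ℂ u).comp (W₂ ∘L
        (((WithLp.prodContinuousLinearEquiv 2 ℂ H₀ HT).symm :
          (H₀ × HT) →L[ℂ] P) ∘L ContinuousLinearMap.inr ℂ H₀ HT)) = 0 := by
      apply hb_clm_ext' f
      rintro ⟨m, n⟩
      have h1 : W₂ (pr (0, f (m, n))) = pr (0, f (m + 1, n)) := hW₂f m n
      have h2 : ⟪u, pr (0, f (m + 1, n))⟫ = 0 := by
        rw [hu, hpr_inner, inner_zero_left, hf (0, 1) (m + 1, n), if_neg, zero_add]
        simp
      simp only [comp_apply, innerSL_apply_apply, ContinuousLinearMap.zero_apply]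
      calc ⟪u, W₂ ((((WithLp.prodContinuousLinearEquiv 2 ℂ H₀ HT).symm :
            (H₀ × HT) →L[ℂ] P) ∘L ContinuousLinearMap.inr ℂ H₀ HT) (f (m, n)))⟫
          = ⟪u, W₂ (pr (0, f (m, n)))⟫ := rfl
        _ = 0 := by rw [h1]; exact h2
    intro b
    simpa [hpr] using DFunLike.congr_fun this b
  -- ⟪u, W₁ w⟫ = ⟪J (e 0), w⟫
  have hW₁pair : ∀ w : P, ⟪u, W₁ w⟫ = ⟪J (e 0), w⟫ := by
    intro w
    have hw : w = pr (w.fst, w.snd) := rfl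
    calc ⟪u, W₁ w⟫ = ⟪u, W₁ (pr (w.fst, w.snd))⟫ := by rw [← hw]
      _ = ⟪pr (0, f (0, 1)), pr (U w.fst, V₁ w.snd)⟫ := by rw [hpr, hW₁]
      _ = ⟪(0 : H₀), U w.fst⟫ + ⟪f (0, 1), V₁ w.snd⟫ := hpr_inner _ _ _ _
      _ = ⟪(0 : H₀), w.fst⟫ + ⟪f (0, 0), w.snd⟫ := by
          rw [inner_zero_left, inner_zero_left, hV₁inner]
      _ = ⟪pr (0, f (0, 0)), pr (w.fst, w.snd)⟫ := (hpr_inner _ _ _ _).symm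
      _ = ⟪J (e 0), w⟫ := by rw [← hJf 0, ← hw]
  -- the main claim : u ⊥ range W₂
  have hclaim : ∀ z : P, ⟪u, W₂ z⟫ = 0 := by
    intro z
    have hzdec : z = pr (z.fst, 0) + pr (0, z.snd) := by
      have h1 : (pr (z.fst, 0) + pr (0, z.snd) : P) = pr (z.fst + 0, 0 + z.snd) := rfl
      rw [h1, add_zero, zero_add]
      rfl
    obtain ⟨a', ha'⟩ := hUsurj z.fst
    have h1 : (pr (z.fst, 0) : P) = W₁ (pr (a', 0)) := by
      rw [hpr, hW₁ a' 0, map_zero, ha']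
    rw [hzdec, map_add, inner_add_right, hpart1, add_zero, h1, ← hcomm', hW₁pair, hJe0perp]
  -- now derive a contradiction
  set p : H := (Ψ u).fst with hp
  set q : M := (Ψ u).snd with hqdef
  have hkey : ∀ (h : H) (m : M), ⟪p, S h⟫ + ⟪q, Y m⟫ = 0 := by
    intro h m
    have h1 : ⟪Ψ u, qr (S h, Y m)⟫ = 0 := by
      rw [← hΨW h m, Ψ.inner_map_map]
      exact hclaim _
    have h2 : ⟪Ψ u, qr (S h, Y m)⟫ = ⟪p, S h⟫ + ⟪q, Y m⟫ := by
      have : (Ψ u : Q) = qr ((Ψ u).fst, (Ψ u).snd) := rfl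
      rw [this, hqr_inner, ← hp, ← hqdef]
    rw [← h2, h1]
  have hq0 : q = 0 := by
    obtain ⟨m, hm⟩ := hYsurj q
    have := hkey 0 m
    rw [map_zero, inner_zero_right, zero_add, hm] at this
    exact inner_self_eq_zero.mp this
  have hpS : ∀ h : H, ⟪p, S h⟫ = 0 := by
    intro h
    have := hkey h 0
    rwa [hq0, inner_zero_left, add_zero] at this
  have hpe : ∀ n : ℕ, ⟪p, e n⟫ = 0 := by
    intro n
    rcases n with _ | n
    · have h1 : ⟪Ψ u, Ψ (J (e 0))⟫ = 0 := by
        rw [Ψ.inner_map_map, hu, hJf 0, hpr_inner, inner_zero_left, hf (0, 1) (0, 0), if_neg,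
          zero_add]
        simp
      have h2 : ⟪Ψ u, Ψ (J (e 0))⟫ = ⟪p, e 0⟫ + ⟪q, (0 : M)⟫ := by
        have h3 : (Ψ u : Q) = qr ((Ψ u).fst, (Ψ u).snd) := rfl
        rw [hΨJ, h3, hqr_inner, ← hp, ← hqdef]
      rw [h2, inner_zero_right, add_zero] at h1
      exact h1
    · rw [← hS n]; exact hpS (e n)
  have hp0 : p = 0 := by
    have : (innerSL ℂ p : H →L[ℂ] ℂ) = 0 := by
      apply hb_clm_ext' e
      intro n
      simpa using hpe n
    have h2 := DFunLike.congr_fun this p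
    simp only [innerSL_apply_apply, ContinuousLinearMap.zero_apply] at h2
    exact inner_self_eq_zero.mp h2
  have hu0 : u = 0 := by
    have : (Ψ u : Q) = 0 := by
      have h3 : (Ψ u : Q) = qr ((Ψ u).fst, (Ψ u).snd) := rfl
      rw [h3, ← hp, ← hqdef, hp0, hq0]
      rfl
    simpa using Ψ.map_eq_zero_iff.mp this
  have hf01 : f (0, 1) = (0 : HT) := congrArg WithLp.snd hu0
  have := f.orthonormal.1 (0, 1)
  rw [hf01, norm_zero] at this
  exact zero_ne_one this
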